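/- arXiv:2208.03927 — 2 statements merged into one kernel-verified Lean document; each statement's English description precedes it below -/
import Mathlib

section
/- Let a be a positive real number, let b be a complex number with Im b ≠ 0 (so that sin(arg b) ≠ 0), and let α, β be complex numbers. Then |(α/a − β/b)/(1 − (conj b)/b)| ≤ max(|α|/a, |β|/|b|) / |sin(arg b)|. -/
/-- Bound for the modulus of the infinitesimal Beltrami coefficient in terms of
the edge ratios and the angle at the vertex `0`. -/
theorem beltrami_bound_sin (a : ℝ) (ha : 0 < a) (b : ℂ) (hb : b.im ≠ 0)
    (α β : ℂ) :
    ‖(α / a - β / b) / (1 - (starRingEnd ℂ) b / b)‖ ≤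
      max (‖α‖ / a) (‖β‖ / ‖b‖) /
        |Real.sin (Complex.arg b)| := by
  have hb0 : b ≠ 0 := fun h => hb (by simp [h])
  have habs : (0:ℝ) < ‖b‖ := by
    simpa [norm_pos_iff] using hb0
  have him : (0:ℝ) < |b.im| := abs_pos.mpr hb
  -- the denominator
  have hden : (1 : ℂ) - (starRingEnd ℂ) b / b = (b - (starRingEnd ℂ) b) / b := by
    field_simp
  have hsub : ‖b - (starRingEnd ℂ) b‖ = 2 * |b.im| := by
    rw [Complex.sub_conj]
    simp [abs_mul, mul_comm]
  have hdenabs : ‖1 - (starRingEnd ℂ) b / b‖ = 2 * |b.im| / ‖b‖ := by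
    rw [hden, norm_div, hsub]
  have hsin : |Real.sin (Complex.arg b)| = |b.im| / ‖b‖ := by
    rw [Complex.sin_arg, abs_div, abs_of_pos habs]
  -- numerator bound
  have hnum : ‖α / a - β / b‖ ≤
      max (‖α‖ / a) (‖β‖ / ‖b‖) +
      max (‖α‖ / a) (‖β‖ / ‖b‖) := by
    calc ‖α / a - β / b‖ ≤ ‖α / a‖ + ‖β / b‖ :=
          norm_sub_le _ _
      _ = ‖α‖ / a + ‖β‖ / ‖b‖ := by
          rw [norm_div, norm_div, Complex.norm_real, Real.norm_eq_abs, abs_of_pos ha]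
      _ ≤ _ := add_le_add (le_max_left _ _) (le_max_right _ _)
  rw [norm_div, hdenabs, hsin]
  rw [div_le_div_iff₀ (by positivity) (by positivity)]
  calc ‖α / ↑a - β / b‖ * (|b.im| / ‖b‖)
      ≤ (max (‖α‖ / a) (‖β‖ / ‖b‖) +
         max (‖α‖ / a) (‖β‖ / ‖b‖)) *
        (|b.im| / ‖b‖) := by
        apply mul_le_mul_of_nonneg_right hnum (by positivity)
    _ = max (‖α‖ / a) (‖β‖ / ‖b‖) *
        (2 * |b.im| / ‖b‖) := by ring
end

section
/- Let a be a positive real number, let b be a complex number with nonzero imaginary part, and suppose the triangle with vertices 0, a, b is inscribed in a circle of radius d > 0, i.e. there is a complex number c with |c| = |a − c| = |b − c| = d. Suppose moreover that |a − b| ≥ 2r for some real r > 0. Then for all complex numbers α, β one has |(α/a − β/b)/(1 − (conj b)/b)| ≤ (d/r)·max(|α|/a, |β|/|b|). -/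
set_option maxHeartbeats 1000000 in
/-- Key estimate: for a triangle `0, a, b` inscribed in a circle of radius `d`
with `|a − b| ≥ 2r`, the infinitesimal Beltrami coefficient is bounded by
`(d/r)·max(|α|/a, |β|/|b|)`. -/
theorem beltrami_bound_circumradius (a : ℝ) (ha : 0 < a) (b : ℂ) (hb : b.im ≠ 0)
    (d r : ℝ) (hd : 0 < d) (hr : 0 < r)
    (hcirc : ∃ c : ℂ, ‖c‖ = d ∧ ‖(a : ℂ) - c‖ = d ∧
      ‖b - c‖ = d)
    (hab : 2 * r ≤ ‖(a : ℂ) - b‖) :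
    ∀ α β : ℂ,
      ‖(α / a - β / b) / (1 - (starRingEnd ℂ) b / b)‖ ≤
        (d / r) * max (‖α‖ / a) (‖β‖ / ‖b‖) := by
  obtain ⟨c, hc0, hca, hcb⟩ := hcirc
  have hbne : b ≠ 0 := fun h => hb (by simp [h])
  have hqpos : 0 < |b.im| := abs_pos.mpr hb
  have hbpos : 0 < ‖b‖ := norm_pos_iff.mpr hbne
  -- squared circle equations
  have e0 : c.re ^ 2 + c.im ^ 2 = d ^ 2 := by
    have h : Complex.normSq c = d ^ 2 := by rw [← Complex.sq_norm, hc0]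
    simp [Complex.normSq_apply] at h; linear_combination h
  have ea : (a - c.re) ^ 2 + c.im ^ 2 = d ^ 2 := by
    have h : Complex.normSq ((a : ℂ) - c) = d ^ 2 := by rw [← Complex.sq_norm, hca]
    simp [Complex.normSq_apply] at h; linear_combination h
  have eb : (b.re - c.re) ^ 2 + (b.im - c.im) ^ 2 = d ^ 2 := by
    have h : Complex.normSq (b - c) = d ^ 2 := by rw [← Complex.sq_norm, hcb]
    simp [Complex.normSq_apply] at h; linear_combination h
  -- circumcenter has real part a/2
  have hx : 2 * c.re = a := by
    have h : a * (2 * c.re) = a * a := by nlinarith [e0, ea]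
    have := mul_left_cancel₀ ha.ne' h
    linarith
  have h2 : 2 * b.im * c.im = b.re ^ 2 + b.im ^ 2 - a * b.re := by
    linear_combination e0 - eb - b.re * hx
  -- key algebraic identity: |b|^2 * |a-b|^2 = 4 d^2 (im b)^2
  have keyalg : (b.re ^ 2 + b.im ^ 2) * ((a - b.re) ^ 2 + b.im ^ 2) = 4 * d ^ 2 * b.im ^ 2 := by
    linear_combination (-(b.im ^ 2) * (2 * c.re + a)) * hx -
      (2 * b.im * c.im + b.re ^ 2 + b.im ^ 2 - a * b.re) * h2 + 4 * b.im ^ 2 * e0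
  have hb2 : (‖b‖) ^ 2 = b.re ^ 2 + b.im ^ 2 := by
    rw [Complex.sq_norm]; simp [Complex.normSq_apply]; ring
  have hab2 : (‖(a : ℂ) - b‖) ^ 2 = (a - b.re) ^ 2 + b.im ^ 2 := by
    rw [Complex.sq_norm]; simp [Complex.normSq_apply]; ring
  have keysq : (‖b‖) ^ 2 * (‖(a : ℂ) - b‖) ^ 2 = 4 * d ^ 2 * b.im ^ 2 := by
    rw [hb2, hab2]; exact keyalg
  -- r |b| ≤ d |im b|
  have hrb : r * ‖b‖ ≤ d * |b.im| := by
    have h1 : (r * ‖b‖) ^ 2 ≤ (d * |b.im|) ^ 2 := by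
      have habnn : 0 ≤ ‖(a : ℂ) - b‖ := norm_nonneg _
      have h4 : (2 * r) * (2 * r) ≤ ‖(a : ℂ) - b‖ * ‖(a : ℂ) - b‖ :=
        mul_le_mul hab hab (by linarith) habnn
      have h5 : 4 * r ^ 2 * (‖b‖) ^ 2 ≤ 4 * d ^ 2 * b.im ^ 2 := by
        nlinarith [keysq, h4, sq_nonneg (‖b‖)]
      nlinarith [h5, sq_abs b.im]
    exact (pow_le_pow_iff_left₀ (mul_nonneg hr.le hbpos.le)
      (mul_nonneg hd.le (abs_nonneg _)) two_ne_zero).mp h1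
  -- modulus of the denominator
  have hden : ‖1 - (starRingEnd ℂ) b / b‖ = 2 * |b.im| / ‖b‖ := by
    have h1 : (1 : ℂ) - (starRingEnd ℂ) b / b = (b - (starRingEnd ℂ) b) / b := by
      field_simp
    have h2 : b - (starRingEnd ℂ) b = (2 * b.im : ℝ) * Complex.I := by
      apply Complex.ext <;> simp [Complex.conj_re, Complex.conj_im] <;> ring
    rw [h1, norm_div, h2]
    simp [abs_mul, abs_of_pos, mul_comm]
  intro α β
  set M := max (‖α‖ / a) (‖β‖ / ‖b‖) with hM
  have hMnn : 0 ≤ M := le_trans (by positivity) (le_max_left _ _)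
  have hnum : ‖α / a - β / b‖ ≤ 2 * M := by
    have t1 : ‖α / a - β / b‖ ≤ ‖α / a‖ + ‖β / b‖ := by
      simpa using norm_sub_le (α / (a : ℂ)) (β / b)
    have t2 : ‖α / (a : ℂ)‖ = ‖α‖ / a := by
      rw [norm_div, Complex.norm_real, Real.norm_eq_abs, abs_of_pos ha]
    have t3 : ‖β / b‖ = ‖β‖ / ‖b‖ := norm_div _ _
    have t4 : ‖α‖ / a ≤ M := le_max_left _ _
    have t5 : ‖β‖ / ‖b‖ ≤ M := le_max_right _ _
    rw [t2, t3] at t1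
    linarith
  rw [norm_div, hden, div_div_eq_mul_div]
  have hgoal : ‖α / a - β / b‖ * ‖b‖ * r ≤ d * M * (2 * |b.im|) :=
    calc ‖α / a - β / b‖ * ‖b‖ * r
        = ‖α / a - β / b‖ * (‖b‖ * r) := by ring
      _ ≤ 2 * M * (‖b‖ * r) :=
          mul_le_mul_of_nonneg_right hnum (mul_nonneg hbpos.le hr.le)
      _ = 2 * M * (r * ‖b‖) := by ring
      _ ≤ 2 * M * (d * |b.im|) :=
          mul_le_mul_of_nonneg_left hrb (by linarith)
      _ = d * M * (2 * |b.im|) := by ring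
  rw [show d / r * M = d * M / r by ring, div_le_div_iff₀ (by positivity) hr]
  linarith
end
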